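/- There exists no α in ℤ[ζ_23], the ring of integers of the 23rd cyclotomic field ℚ(ζ_23), such that α·conj(α) = 2, where conj denotes complex conjugation. -/

import Mathlib

open Finset Polynomial

lemma stmt15_pow_mod {ζ : ℂ} (hζ : IsPrimitiveRoot ζ 23) (m : ℕ) : ζ ^ m = ζ ^ (m % 23) := by
  conv_lhs => rw [← Nat.div_add_mod m 23]
  rw [pow_add, pow_mul, hζ.pow_eq_one, one_pow, one_mul]

lemma stmt15_geom {ζ : ℂ} (hζ : IsPrimitiveRoot ζ 23) (m : ℕ) :
    ∑ k ∈ range 23, (ζ ^ m) ^ k = if (23 : ℕ) ∣ m then 23 else 0 := by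
  by_cases h : (23 : ℕ) ∣ m
  · obtain ⟨c, rfl⟩ := h
    simp [pow_mul, hζ.pow_eq_one]
  · rw [if_neg h]
    have hne : ζ ^ m ≠ 1 := by
      intro hone
      exact h (hζ.pow_eq_one_iff_dvd m |>.mp hone)
    have := geom_sum_eq hne 23
    rw [this, ← pow_mul, mul_comm, pow_mul, hζ.pow_eq_one, one_pow, sub_self, zero_div]

lemma stmt15_conj_pow {ζ : ℂ} (hζ : IsPrimitiveRoot ζ 23) (i : ℕ) :
    (starRingEnd ℂ) (ζ ^ i) = ζ ^ (22 * i % 23) := by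
  have habs : ‖ζ‖ = 1 := hζ.norm'_eq_one (by norm_num)
  have hmc : ζ ^ i * ζ ^ (22 * i % 23) = 1 := by
    rw [← pow_add, stmt15_pow_mod hζ, show (i + 22 * i % 23) % 23 = 0 by omega, pow_zero]
  have h1 : (starRingEnd ℂ) (ζ ^ i) * ζ ^ i = 1 := by
    rw [mul_comm, Complex.mul_conj]
    norm_cast
    rw [← Complex.sq_norm, norm_pow, habs]
    norm_num
  calc (starRingEnd ℂ) (ζ ^ i) = (starRingEnd ℂ) (ζ ^ i) * (ζ ^ i * ζ ^ (22 * i % 23)) := by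
        rw [hmc, mul_one]
  _ = ((starRingEnd ℂ) (ζ ^ i) * ζ ^ i) * ζ ^ (22 * i % 23) := by ring
  _ = ζ ^ (22 * i % 23) := by rw [h1, one_mul]

lemma stmt15_parseval {ζ : ℂ} (hζ : IsPrimitiveRoot ζ 23) (a : ℕ → ℤ) :
    ∑ k ∈ range 23, ((∑ i ∈ range 23, (a i : ℂ) * (ζ ^ k) ^ i) *
      (∑ j ∈ range 23, (a j : ℂ) * (ζ ^ k) ^ (22 * j % 23))) =
    23 * ∑ i ∈ range 23, (a i : ℂ) * a i := by
  have step : ∀ k ∈ range 23, (∑ i ∈ range 23, (a i : ℂ) * (ζ ^ k) ^ i) *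
      (∑ j ∈ range 23, (a j : ℂ) * (ζ ^ k) ^ (22 * j % 23)) =
      ∑ i ∈ range 23, ∑ j ∈ range 23,
        ((a i : ℂ) * a j) * (ζ ^ (i + 22 * j % 23)) ^ k := by
    intro k _
    rw [Finset.sum_mul_sum]
    apply Finset.sum_congr rfl
    intro i _
    apply Finset.sum_congr rfl
    intro j _
    have : (ζ ^ k) ^ i * (ζ ^ k) ^ (22 * j % 23) = (ζ ^ (i + 22 * j % 23)) ^ k := by
      rw [← pow_mul, ← pow_mul, ← pow_add, ← pow_mul]
      ring_nf
    rw [← this]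
    ring
  rw [Finset.sum_congr rfl step, Finset.sum_comm]
  have inner : ∀ i ∈ range 23, ∑ k ∈ range 23, ∑ j ∈ range 23,
      ((a i : ℂ) * a j) * (ζ ^ (i + 22 * j % 23)) ^ k = 23 * ((a i : ℂ) * a i) := by
    intro i hi
    rw [Finset.sum_comm]
    have hij : ∀ j ∈ range 23, ∑ k ∈ range 23, ((a i : ℂ) * a j) * (ζ ^ (i + 22 * j % 23)) ^ k
        = if i = j then 23 * ((a i : ℂ) * a i) else 0 := by
      intro j hj
      rw [← Finset.mul_sum, stmt15_geom hζ]
      simp only [Finset.mem_range] at hi hj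
      by_cases h : i = j
      · subst h
        rw [if_pos (by omega), if_pos rfl]; ring
      · rw [if_neg (by omega), if_neg h, mul_zero]
    rw [Finset.sum_congr rfl hij, Finset.sum_ite_eq (range 23) i (fun _ => 23 * ((a i : ℂ) * a i)),
      if_pos hi]
  rw [Finset.sum_congr rfl inner, ← Finset.mul_sum]

lemma stmt15_conjugates {ζ : ℂ} (hζ : IsPrimitiveRoot ζ 23) (a : ℕ → ℤ)
    (h2 : (∑ i ∈ range 23, (a i : ℂ) * ζ ^ i) *
      (∑ i ∈ range 23, (a i : ℂ) * ζ ^ (22 * i % 23)) = 2) :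
    ∀ k, 1 ≤ k → k < 23 →
      (∑ i ∈ range 23, (a i : ℂ) * (ζ ^ k) ^ i) *
        (∑ i ∈ range 23, (a i : ℂ) * (ζ ^ k) ^ (22 * i % 23)) = 2 := by
  set A : Polynomial ℤ := ∑ i ∈ range 23, Polynomial.C (a i) * Polynomial.X ^ i with hA
  set B : Polynomial ℤ := ∑ i ∈ range 23, Polynomial.C (a i) * Polynomial.X ^ (22 * i % 23) with hB
  have haevA : ∀ z : ℂ, Polynomial.aeval z A = ∑ i ∈ range 23, (a i : ℂ) * z ^ i := by
    intro z; rw [hA, map_sum]; simp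
  have haevB : ∀ z : ℂ, Polynomial.aeval z B = ∑ i ∈ range 23, (a i : ℂ) * z ^ (22 * i % 23) := by
    intro z; rw [hB, map_sum]; simp
  have hroot : Polynomial.aeval ζ (A * B - Polynomial.C 2) = 0 := by
    rw [map_sub, map_mul, haevA, haevB, h2]; simp [map_ofNat]
  have hint : IsIntegral ℤ ζ := hζ.isIntegral (by norm_num)
  have hmin : Polynomial.cyclotomic 23 ℤ = minpoly ℤ ζ :=
    Polynomial.cyclotomic_eq_minpoly hζ (by norm_num)
  have hdvd : Polynomial.cyclotomic 23 ℤ ∣ A * B - Polynomial.C 2 := by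
    rw [hmin]
    exact minpoly.isIntegrallyClosed_dvd hint hroot
  have hdvdC : Polynomial.cyclotomic 23 ℂ ∣
      (A * B - Polynomial.C 2).map (Int.castRingHom ℂ) := by
    have := Polynomial.map_dvd (Int.castRingHom ℂ) hdvd
    rwa [Polynomial.map_cyclotomic] at this
  intro k hk1 hk2
  have hcop : Nat.Coprime k 23 :=
    Nat.coprime_comm.mp ((Nat.Prime.coprime_iff_not_dvd (by norm_num)).mpr (by omega))
  have hprimk : IsPrimitiveRoot (ζ ^ k) 23 := hζ.pow_of_coprime k hcop
  have hrootk : Polynomial.IsRoot (Polynomial.cyclotomic 23 ℂ) (ζ ^ k) :=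
    hprimk.isRoot_cyclotomic (by norm_num)
  have heval0 : Polynomial.eval (ζ ^ k) ((A * B - Polynomial.C 2).map (Int.castRingHom ℂ)) = 0 := by
    obtain ⟨q, hq⟩ := hdvdC
    rw [hq, Polynomial.eval_mul, hrootk.eq_zero, zero_mul]
  have haev : Polynomial.aeval (ζ ^ k) (A * B - Polynomial.C 2) = 0 := by
    rwa [Polynomial.aeval_def, Polynomial.eval₂_eq_eval_map,
      show algebraMap ℤ ℂ = Int.castRingHom ℂ from rfl]
  rw [map_sub, map_mul, haevA, haevB] at haev
  have : (Polynomial.aeval (ζ ^ k) (Polynomial.C (2:ℤ)) : ℂ) = 2 := by simp [map_ofNat]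
  rw [this] at haev
  linear_combination haev

lemma stmt15_repr {ζ : ℂ} (hζ : IsPrimitiveRoot ζ 23) {α : ℂ}
    (hmem : α ∈ Algebra.adjoin ℤ {ζ}) :
    ∃ a : ℕ → ℤ, a 22 = 0 ∧ α = ∑ i ∈ range 23, (a i : ℂ) * ζ ^ i := by
  rw [Algebra.adjoin_singleton_eq_range_aeval] at hmem
  obtain ⟨f, hf⟩ := hmem
  set q : Polynomial ℤ := Polynomial.X ^ 23 - Polynomial.C 1 with hq
  have hmonic : q.Monic := Polynomial.monic_X_pow_sub_C 1 (by norm_num)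
  have hqdeg : q.natDegree = 23 := by
    rw [hq, Polynomial.natDegree_X_pow_sub_C]
  have hqne : q ≠ 1 := by
    intro h
    rw [h, Polynomial.natDegree_one] at hqdeg
    exact absurd hqdeg (by norm_num)
  set g : Polynomial ℤ := f %ₘ q with hg
  have hdeg : g.natDegree < 23 := by
    have := Polynomial.natDegree_modByMonic_lt f hmonic hqne
    rwa [hqdeg] at this
  have haevq : Polynomial.aeval ζ q = 0 := by
    rw [hq, map_sub, map_pow, Polynomial.aeval_X, Polynomial.aeval_C, hζ.pow_eq_one]
    simp
  have haevg : Polynomial.aeval ζ g = α := by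
    have := Polynomial.modByMonic_add_div f q
    have h2 : Polynomial.aeval ζ (f %ₘ q + q * (f /ₘ q)) = Polynomial.aeval ζ f := by rw [this]
    rw [map_add, map_mul, haevq, zero_mul, add_zero] at h2
    rw [← hg] at h2
    rw [h2]; exact hf
  have hgsum : α = ∑ i ∈ range 23, ((g.coeff i : ℂ)) * ζ ^ i := by
    rw [← haevg, Polynomial.aeval_eq_sum_range' hdeg]
    apply Finset.sum_congr rfl
    intro i _
    rw [zsmul_eq_mul]
  have hzsum : ∑ i ∈ range 23, ζ ^ i = 0 := by
    have := stmt15_geom hζ 1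
    rw [if_neg (by norm_num)] at this
    simpa using this
  refine ⟨fun i => g.coeff i - g.coeff 22, by simp, ?_⟩
  push_cast
  rw [Finset.sum_congr rfl (fun i _ => sub_mul ((g.coeff i : ℂ)) ((g.coeff 22 : ℂ)) (ζ ^ i)),
    Finset.sum_sub_distrib, ← Finset.mul_sum, hzsum, mul_zero, sub_zero, hgsum]

/-- pure integer combinatorics part -/
lemma stmt15_int_part (a : ℕ → ℤ) (h22 : a 22 = 0)
    (hmain : 23 * ∑ i ∈ range 23, a i * a i = (∑ i ∈ range 23, a i) * (∑ i ∈ range 23, a i) + 44) :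
    False := by
  set s : ℤ := ∑ i ∈ range 23, a i with hs
  set Q : ℤ := ∑ i ∈ range 23, a i * a i with hQ
  -- |s| ≤ Q
  have habs1 : |s| ≤ Q := by
    calc |s| ≤ ∑ i ∈ range 23, |a i| := Finset.abs_sum_le_sum_abs _ _
    _ ≤ Q := by
        apply Finset.sum_le_sum
        intro i _
        rcases le_or_gt (a i) 0 with h | h
        · rw [abs_of_nonpos h]; nlinarith
        · rw [abs_of_pos h]; nlinarith [Int.add_one_le_iff.mpr h]
  -- 3|s| ≤ Q + 46
  have habs3 : 3 * |s| ≤ Q + 46 := by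
    have : ∑ i ∈ range 23, (3 * |a i|) ≤ ∑ i ∈ range 23, (a i * a i + 2) := by
      apply Finset.sum_le_sum
      intro i _
      rcases le_or_gt (|a i|) 1 with h | h
      · have h0 := abs_nonneg (a i)
        have := sq_abs (a i); nlinarith
      · have h2 : 2 ≤ |a i| := h
        have := sq_abs (a i); nlinarith
    calc 3 * |s| ≤ 3 * ∑ i ∈ range 23, |a i| := by
          have := Finset.abs_sum_le_sum_abs a (range 23); linarith
    _ = ∑ i ∈ range 23, (3 * |a i|) := by rw [Finset.mul_sum]
    _ ≤ ∑ i ∈ range 23, (a i * a i + 2) := this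
    _ = Q + 46 := by rw [Finset.sum_add_distrib]; simp [hQ]
  -- Cauchy–Schwarz over 22 coordinates (a 22 = 0)
  have hs22 : s = ∑ i ∈ range 22, a i := by
    rw [hs, Finset.sum_range_succ, h22, add_zero]
  have hQ22 : Q = ∑ i ∈ range 22, a i * a i := by
    rw [hQ, Finset.sum_range_succ, h22, mul_zero, add_zero]
  have hCS : s * s ≤ 22 * Q := by
    have := Finset.sum_mul_sq_le_sq_mul_sq (range 22) a (fun _ => 1)
    simp only [mul_one, one_pow, Finset.sum_const, Finset.card_range, nsmul_eq_mul] at this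
    have h2 : Q = ∑ i ∈ range 22, a i ^ 2 := by
      rw [hQ22]; apply Finset.sum_congr rfl; intros; ring
    push_cast at this
    rw [pow_two] at this
    rw [h2, hs22]
    linarith
  -- now finish
  have hQle : Q ≤ 44 := by nlinarith
  have hb : |s| ≤ 31 := by nlinarith [abs_nonneg s, sq_abs s, abs_mul_abs_self s]
  have hb0 : 0 ≤ |s| := abs_nonneg s
  have hss : |s| * |s| = 23 * Q - 44 := by
    have := abs_mul_abs_self s; omega
  set t : ℤ := |s| with ht
  interval_cases t <;> omega

/-- There is no `α` in `ℤ[ζ₂₃]`, the ring of integers of the 23rd cyclotomic field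
(viewed inside `ℂ` as `Algebra.adjoin ℤ {ζ₂₃}` with `ζ₂₃ = exp(2πi/23)`),
with `α * conj α = 2`. -/
theorem stmt_15 :
    ¬∃ α : ℂ, α ∈ Algebra.adjoin ℤ {Complex.exp (2 * Real.pi * Complex.I / 23)} ∧
      α * (starRingEnd ℂ) α = 2 := by
  rintro ⟨α, hmem, hα⟩
  have hζ : IsPrimitiveRoot (Complex.exp (2 * Real.pi * Complex.I / 23)) 23 := by
    have := Complex.isPrimitiveRoot_exp 23 (by norm_num)
    norm_num at this
    exact this
  set ζ : ℂ := Complex.exp (2 * Real.pi * Complex.I / 23) with hζdef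
  obtain ⟨a, h22, hrep⟩ := stmt15_repr hζ hmem
  -- conjugate representation
  have hconj : (starRingEnd ℂ) α = ∑ i ∈ range 23, (a i : ℂ) * ζ ^ (22 * i % 23) := by
    rw [hrep, map_sum]
    apply Finset.sum_congr rfl
    intro i _
    rw [map_mul, stmt15_conj_pow hζ i]
    norm_num
  have h2 : (∑ i ∈ range 23, (a i : ℂ) * ζ ^ i) *
      (∑ i ∈ range 23, (a i : ℂ) * ζ ^ (22 * i % 23)) = 2 := by
    rw [← hrep, ← hconj]; exact hα
  have hprod := stmt15_conjugates hζ a h2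
  -- define P k
  set P : ℕ → ℂ := fun k => (∑ i ∈ range 23, (a i : ℂ) * (ζ ^ k) ^ i) *
      (∑ i ∈ range 23, (a i : ℂ) * (ζ ^ k) ^ (22 * i % 23)) with hP
  set s : ℂ := ∑ i ∈ range 23, (a i : ℂ) with hsdef
  have hP0 : P 0 = s * s := by
    rw [hP]; simp [hsdef]
  have hsplit : ∑ k ∈ range 23, (P k - 2) = P 0 - 2 := by
    apply Finset.sum_eq_single_of_mem 0 (Finset.mem_range.mpr (by norm_num))
    intro k hk hne
    have hp := hprod k (by omega) (by simpa using hk)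
    simp only [hP]
    rw [hp]
    ring
  have hsum : ∑ k ∈ range 23, P k = s * s + 44 := by
    have : ∑ k ∈ range 23, P k = ∑ k ∈ range 23, ((P k - 2) + 2) := by
      apply Finset.sum_congr rfl; intros; ring
    rw [this, Finset.sum_add_distrib, hsplit, hP0]
    simp
    ring
  have hpars := stmt15_parseval hζ a
  rw [← hP] at hpars
  have hfinal : (23 : ℂ) * ∑ i ∈ range 23, (a i : ℂ) * a i = s * s + 44 := by
    rw [← hpars, ← hsum]
  have hZ : 23 * ∑ i ∈ range 23, a i * a i =
      (∑ i ∈ range 23, a i) * (∑ i ∈ range 23, a i) + 44 := by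
    have := hfinal
    rw [hsdef] at this
    exact_mod_cast this
  exact stmt15_int_part a h22 hZ
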